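/- Suppose the Verblunsky coefficients satisfy |α_n| ≤ C q^n for all n ≥ 0, where C > 0 and q ∈ (0,1). Then there exists an analytic function S on {z ∈ ℂ : |z| < 1/q} such that Φ_n* converges to S uniformly on every compact subset of {z : |z| < 1/q}. -/

import Mathlib

open Polynomial Filter Topology

/-- The monic orthogonal polynomials on the unit circle, defined by the Szegő
recursion `Φ₀ = 1`, `Φ_{n+1}(z) = z Φ_n(z) - conj(α_n) Φ_n^*(z)`, where the reversed
polynomial is `P^*(z) = Σ_{j=0}^n conj(c_{n-j}) z^j`. -/
noncomputable def PhiP (α : ℕ → ℂ) : ℕ → Polynomial ℂ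
  | 0 => 1
  | n + 1 => X * PhiP α n -
      Polynomial.C ((starRingEnd ℂ) (α n)) *
        Polynomial.reflect n (Polynomial.map (starRingEnd ℂ) (PhiP α n))

/-- The reversed polynomial `Φ_n^*(z) = z^n conj(Φ_n(1/conj z))`. -/
noncomputable def PhiStarP (α : ℕ → ℂ) (n : ℕ) : Polynomial ℂ :=
  Polynomial.reflect n (Polynomial.map (starRingEnd ℂ) (PhiP α n))

set_option linter.unusedVariables false in

lemma reflect_reflect' (N : ℕ) (p : Polynomial ℂ) : reflect N (reflect N p) = p := by
  ext i
  simp [coeff_reflect, revAt_invol]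

lemma natDegree_reflect_le {p : Polynomial ℂ} {n : ℕ} (h : p.natDegree ≤ n) :
    (reflect n p).natDegree ≤ n := by
  rw [natDegree_le_iff_coeff_eq_zero] at h ⊢
  intro N hN
  rw [coeff_reflect, revAt_eq_self_of_lt hN]
  exact h _ hN

lemma natDegree_PhiP_le (α : ℕ → ℂ) : ∀ n, (PhiP α n).natDegree ≤ n
  | 0 => by simp [PhiP]
  | n+1 => by
    rw [PhiP]
    refine (natDegree_sub_le _ _).trans (max_le ?_ ?_)
    · refine natDegree_mul_le.trans ?_
      have h1 := natDegree_PhiP_le α n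
      have hx := natDegree_X_le (R := ℂ)
      omega
    · refine natDegree_mul_le.trans ?_
      have : (Polynomial.map (starRingEnd ℂ) (PhiP α n)).natDegree ≤ n := by
        simpa [natDegree_map] using natDegree_PhiP_le α n
      simpa using (natDegree_reflect_le this).trans (Nat.le_succ n)

lemma PhiStarP_succ (α : ℕ → ℂ) (n : ℕ) :
    PhiStarP α (n+1) = PhiStarP α n - Polynomial.C (α n) * (X * PhiP α n) := by
  have hdeg : (PhiP α n).natDegree ≤ n := natDegree_PhiP_le α n
  have hmapdeg : (Polynomial.map (starRingEnd ℂ) (PhiP α n)).natDegree ≤ n := by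
    simpa [natDegree_map] using hdeg
  have hXP : reflect (1 + n) (X * PhiP α n) = reflect n (PhiP α n) := by
    rw [reflect_mul _ _ natDegree_X_le hdeg, reflect_one_X, one_mul]
  have hXP' : reflect (n + 1) (reflect n (PhiP α n)) = X * PhiP α n := by
    rw [← Nat.add_comm 1 n, ← hXP, reflect_reflect']
  have hmm : Polynomial.map (starRingEnd ℂ)
      (reflect n (Polynomial.map (starRingEnd ℂ) (PhiP α n))) = reflect n (PhiP α n) := by
    have hcc : (starRingEnd ℂ).comp (starRingEnd ℂ) = RingHom.id ℂ :=
      RingHom.ext fun x => Complex.conj_conj x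
    rw [← reflect_map, Polynomial.map_map, hcc, Polynomial.map_id]
  rw [PhiStarP, PhiP, Polynomial.map_sub, Polynomial.map_mul, Polynomial.map_mul, map_C,
    Polynomial.map_X, reflect_sub, hmm, reflect_C_mul, hXP']
  congr 1
  · rw [show n + 1 = 1 + n from Nat.add_comm n 1,
      reflect_mul _ _ natDegree_X_le hmapdeg, reflect_one_X, one_mul, PhiStarP]
  · simp

lemma eval_PhiStarP_zero (α : ℕ → ℂ) (z : ℂ) : (PhiStarP α 0).eval z = 1 := by
  simp [PhiStarP, PhiP]

lemma eval_PhiStarP_succ (α : ℕ → ℂ) (n : ℕ) (z : ℂ) :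
    (PhiStarP α (n+1)).eval z
      = (PhiStarP α n).eval z - α n * (z * (PhiP α n).eval z) := by
  rw [PhiStarP_succ]; simp [mul_assoc]

lemma eval_PhiP_succ (α : ℕ → ℂ) (n : ℕ) (z : ℂ) :
    (PhiP α (n+1)).eval z
      = z * (PhiP α n).eval z - (starRingEnd ℂ) (α n) * (PhiStarP α n).eval z := by
  rw [PhiP]; simp [PhiStarP]

lemma tri (x y : ℂ) : ‖x - y‖ ≤ ‖x‖ + ‖y‖ := by
  exact norm_sub_le x y

lemma phi_bound (α : ℕ → ℂ) (C q : ℝ) (hC : 0 < C) (hq0 : 0 < q)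
    (hdecay : ∀ n, ‖α n‖ ≤ C * q ^ n) (ρ : ℝ) (hρ : 1 ≤ ρ)
    (z : ℂ) (hz : ‖z‖ ≤ ρ) : ∀ n : ℕ,
    ‖(PhiStarP α n).eval z‖
        ≤ Real.exp (C * ρ * ∑ k ∈ Finset.range n, (q * ρ) ^ k) ∧
      ‖z * (PhiP α n).eval z‖
        ≤ ρ ^ (n+1) * Real.exp (C * ρ * ∑ k ∈ Finset.range n, (q * ρ) ^ k) := by
  have hρ0 : (0:ℝ) < ρ := lt_of_lt_of_le one_pos hρ
  intro n
  induction n with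
  | zero =>
    constructor
    · simp [eval_PhiStarP_zero]
    · simpa [PhiP] using hz
  | succ n ih =>
    obtain ⟨ih1, ih2⟩ := ih
    set t := q * ρ with ht
    set E := Real.exp (C * ρ * ∑ k ∈ Finset.range n, t ^ k) with hE
    have hE0 : (0:ℝ) < E := Real.exp_pos _
    have ht0 : (0:ℝ) ≤ t := by positivity
    have hE' : Real.exp (C * ρ * ∑ k ∈ Finset.range (n+1), t ^ k)
        = E * Real.exp (C * ρ * t ^ n) := by
      rw [Finset.sum_range_succ, mul_add, Real.exp_add]
    have hone : 1 + C * ρ * t ^ n ≤ Real.exp (C * ρ * t ^ n) := by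
      have := Real.add_one_le_exp (C * ρ * t ^ n); linarith
    have habs := hdecay n
    have hq' : (0:ℝ) ≤ C * q ^ n := by positivity
    constructor
    · rw [eval_PhiStarP_succ, hE']
      calc ‖(PhiStarP α n).eval z - α n * (z * (PhiP α n).eval z)‖
          ≤ ‖(PhiStarP α n).eval z‖
            + ‖α n‖ * ‖z * (PhiP α n).eval z‖ := by
            simpa [norm_mul] using tri ((PhiStarP α n).eval z) (α n * (z * (PhiP α n).eval z))
        _ ≤ E + (C * q ^ n) * (ρ ^ (n+1) * E) := by
            refine add_le_add ih1 (mul_le_mul habs ih2 (norm_nonneg _) hq')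
        _ = E * (1 + C * ρ * t ^ n) := by rw [ht]; ring
        _ ≤ E * Real.exp (C * ρ * t ^ n) := by
            exact mul_le_mul_of_nonneg_left hone hE0.le
    · rw [eval_PhiP_succ, mul_sub, hE']
      have key2 : ρ * (C * q ^ n) * E ≤ ρ ^ (n+2) * (C * ρ * t ^ n) * E := by
        calc ρ * (C * q ^ n) * E = (C * q ^ n * E) * ρ ^ 1 := by ring
          _ ≤ (C * q ^ n * E) * ρ ^ (2*n+3) := by
              refine mul_le_mul_of_nonneg_left (pow_le_pow_right₀ hρ (by omega)) (by positivity)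
          _ = ρ ^ (n+2) * (C * ρ * t ^ n) * E := by rw [ht]; ring
      calc ‖z * (z * (PhiP α n).eval z)
              - z * ((starRingEnd ℂ) (α n) * (PhiStarP α n).eval z)‖
          ≤ ‖z‖ * ‖z * (PhiP α n).eval z‖
            + ‖z‖ * (‖α n‖ * ‖(PhiStarP α n).eval z‖) := by
            simpa [norm_mul, Complex.norm_conj] using
              tri (z * (z * (PhiP α n).eval z))
                (z * ((starRingEnd ℂ) (α n) * (PhiStarP α n).eval z))
        _ ≤ ρ * (ρ ^ (n+1) * E) + ρ * ((C * q ^ n) * E) := by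
            refine add_le_add (mul_le_mul hz ih2 (norm_nonneg _) hρ0.le) ?_
            refine mul_le_mul hz (mul_le_mul habs ih1 (norm_nonneg _) hq') ?_ hρ0.le
            positivity
        _ ≤ ρ ^ (n+2) * E + ρ ^ (n+2) * (C * ρ * t ^ n) * E := by
            refine add_le_add (le_of_eq (by ring)) (by linarith [key2])
        _ = ρ ^ (n+1+1) * (E * Real.exp (C * ρ * t ^ n)) - ρ^(n+2) * E * (Real.exp (C*ρ*t^n) - (1 + C*ρ*t^n)) := by ring
        _ ≤ ρ ^ (n+1+1) * (E * Real.exp (C * ρ * t ^ n)) := by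
            have h0 : (0:ℝ) ≤ Real.exp (C*ρ*t^n) - (1 + C*ρ*t^n) := by linarith
            nlinarith [pow_pos hρ0 (n+2), mul_nonneg (mul_nonneg (pow_pos hρ0 (n+2)).le hE0.le) h0]

set_option linter.unusedVariables false in
theorem stmt_3 (α : ℕ → ℂ) (hα : ∀ n, ‖α n‖ < 1)
    (C q : ℝ) (hC : 0 < C) (hq0 : 0 < q) (hq1 : q < 1)
    (hdecay : ∀ n : ℕ, ‖α n‖ ≤ C * q ^ n) :
    ∃ S : ℂ → ℂ, AnalyticOnNhd ℂ S {z : ℂ | ‖z‖ < 1 / q} ∧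
      ∀ K : Set ℂ, K ⊆ {z : ℂ | ‖z‖ < 1 / q} → IsCompact K →
        TendstoUniformlyOn (fun (n : ℕ) (z : ℂ) => (PhiStarP α n).eval z) S atTop K := by
  classical
  set U : Set ℂ := {z : ℂ | ‖z‖ < 1 / q} with hUdef
  set f : ℕ → ℂ → ℂ := fun k z => (PhiStarP α (k+1)).eval z - (PhiStarP α k).eval z with hfdef
  set S : ℂ → ℂ := fun z => 1 + ∑' k, f k z with hSdef
  have key : ∀ K : Set ℂ, K ⊆ U → IsCompact K →
      TendstoUniformlyOn (fun (n : ℕ) (z : ℂ) => (PhiStarP α n).eval z) S atTop K := by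
    intro K hKU hK
    rcases K.eq_empty_or_nonempty with rfl | hne
    · exact tendstoUniformlyOn_empty
    obtain ⟨z0, hz0K, hmax'⟩ := hK.exists_isMaxOn hne continuous_norm.continuousOn
    have hmax : ∀ z ∈ K, ‖z‖ ≤ ‖z0‖ := fun z hz => hmax' hz
    set ρ : ℝ := max (‖z0‖) 1 with hρdef
    have hρ1 : (1:ℝ) ≤ ρ := le_max_right _ _
    have hρ0 : (0:ℝ) < ρ := lt_of_lt_of_le one_pos hρ1
    set t : ℝ := q * ρ with htdef
    have ht0 : (0:ℝ) ≤ t := by positivity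
    have hz0U : ‖z0‖ < 1 / q := hKU hz0K
    have ht1 : t < 1 := by
      rw [htdef, hρdef, mul_max_of_nonneg _ _ hq0.le]
      refine max_lt ?_ (by simpa using hq1)
      rw [mul_comm]
      exact (lt_div_iff₀ hq0).mp hz0U
    set B : ℝ := Real.exp (C * ρ * (1 - t)⁻¹) with hBdef
    have hB0 : (0:ℝ) < B := Real.exp_pos _
    have hbound : ∀ (k : ℕ) (z : ℂ), z ∈ K → ‖f k z‖ ≤ (C * ρ * B) * t ^ k := by
      intro k z hz
      have hzρ : ‖z‖ ≤ ρ := le_trans (hmax z hz) (le_max_left _ _)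
      obtain ⟨h1, h2⟩ := phi_bound α C q hC hq0 hdecay ρ hρ1 z hzρ k
      have hEB : Real.exp (C * ρ * ∑ i ∈ Finset.range k, t ^ i) ≤ B := by
        rw [hBdef]
        refine Real.exp_le_exp.mpr (mul_le_mul_of_nonneg_left ?_ (by positivity))
        have hsum := Summable.sum_le_tsum (Finset.range k) (fun i _ => pow_nonneg ht0 i)
          (summable_geometric_of_lt_one ht0 ht1)
        rwa [tsum_geometric_of_lt_one ht0 ht1] at hsum
      have hf' : f k z = -(α k * (z * (PhiP α k).eval z)) := by
        rw [hfdef]; simp only []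
        rw [eval_PhiStarP_succ]; ring
      rw [hf', norm_neg, norm_mul]
      calc ‖α k‖ * ‖z * (PhiP α k).eval z‖
          ≤ (C * q ^ k) * (ρ ^ (k+1) * B) := by
            refine mul_le_mul (hdecay k) (h2.trans ?_) (norm_nonneg _) (by positivity)
            exact mul_le_mul_of_nonneg_left hEB (by positivity)
        _ = (C * ρ * B) * t ^ k := by rw [htdef]; ring
    have hsummable : Summable (fun k : ℕ => (C * ρ * B) * t ^ k) :=
      (summable_geometric_of_lt_one ht0 ht1).mul_left _
    have htsum := tendstoUniformlyOn_tsum_nat hsummable hbound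
    have hconst : TendstoUniformlyOn (fun (_ : ℕ) (_ : ℂ) => (1:ℂ)) (fun _ => (1:ℂ))
        atTop K := Filter.Tendsto.tendstoUniformlyOn_const tendsto_const_nhds K
    have hS : TendstoUniformlyOn (fun (N : ℕ) (z : ℂ) => 1 + ∑ k ∈ Finset.range N, f k z)
        S atTop K := hconst.add htsum
    refine hS.congr (Eventually.of_forall fun N z hz => ?_)
    show 1 + ∑ k ∈ Finset.range N, f k z = eval z (PhiStarP α N)
    simp only [hfdef]
    rw [Finset.sum_range_sub (fun k => (PhiStarP α k).eval z), eval_PhiStarP_zero]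
    ring
  have hopen : IsOpen U := isOpen_lt continuous_norm continuous_const
  refine ⟨S, ?_, key⟩
  have hloc : TendstoLocallyUniformlyOn (fun (n : ℕ) (z : ℂ) => (PhiStarP α n).eval z)
      S atTop U := (tendstoLocallyUniformlyOn_iff_forall_isCompact hopen).mpr key
  exact (hloc.differentiableOn
    (Eventually.of_forall fun n => (PhiStarP α n).differentiableOn) hopen).analyticOnNhd hopen
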